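/- (Exact expectation form of Lemma 1.) Let the K-target noiseless OFDM radar snapshots be Ȳ_m = Σ_{k=0}^{K−1} ᾱ_k · D(ν_k) · F_N^H · diag(x_m) · b(τ_k) · conj([c(ν_k)]_m) · a_k^T ∈ ℂ^{N×N_R}, m = 0, …, M−1, where ᾱ_k ∈ ℂ, a_k ∈ ℂ^{N_R}, and the random data symbols x_{n,m} = [x_m]_n satisfy E[x_{n,m} · conj(x_{n',m})] = σ_x² δ_{n,n'} for every m (all such products integrable). Assume that for every pair k₁ ≠ k₂, either b(τ_{k₁})^H b(τ_{k₂}) = 0 or c(ν_{k₁})^H c(ν_{k₂}) = 0. Then the entrywise expectation of the spatial covariance matrix R = Σ_{m=0}^{M−1} Ȳ_m^H Ȳ_m equals E[R] = N M σ_x² Σ_{k=0}^{K−1} |ᾱ_k|² · a_k^* a_k^T. -/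

import Mathlib

open Matrix MeasureTheory

/-- The `N×N` unitary DFT matrix, `[F_N]_{ℓ,n} = (1/√N) e^{-2πi nℓ/N}`. -/
noncomputable def dftMatrix (N : ℕ) : Matrix (Fin N) (Fin N) ℂ :=
  fun l n => (1 / (Real.sqrt N : ℂ)) *
    Complex.exp (-(2 * (Real.pi : ℂ) * Complex.I * ((n : ℕ) : ℂ) * ((l : ℕ) : ℂ) / (N : ℂ)))

/-- Frequency-domain (delay) steering vector `[b(τ)]_n = e^{-2πi n Δf τ}`. -/
noncomputable def steerB (N : ℕ) (Δf τ : ℝ) : Fin N → ℂ :=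
  fun n => Complex.exp (-(2 * (Real.pi : ℂ) * Complex.I * ((n : ℕ) : ℂ) * (Δf : ℂ) * (τ : ℂ)))

/-- Slow-time (Doppler) steering vector `[c(ν)]_m = e^{-2πi f_c m T_sym ν}`. -/
noncomputable def steerC (M : ℕ) (fc Tsym ν : ℝ) : Fin M → ℂ :=
  fun m => Complex.exp (-(2 * (Real.pi : ℂ) * Complex.I * (fc : ℂ) * ((m : ℕ) : ℂ) *
    (Tsym : ℂ) * (ν : ℂ)))

/-- ICI phase rotation matrix `D(ν) = diag(e^{2πi f_c T n ν / N})_{n=0,…,N-1}`. -/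
noncomputable def iciD (N : ℕ) (fc T ν : ℝ) : Matrix (Fin N) (Fin N) ℂ :=
  Matrix.diagonal (fun n =>
    Complex.exp (2 * (Real.pi : ℂ) * Complex.I * (fc : ℂ) * (T : ℂ) * ((n : ℕ) : ℂ) *
      (ν : ℂ) / (N : ℂ)))

/-- diagonal entries of iciD -/
noncomputable def dcoef (N : ℕ) (fc T ν : ℝ) : Fin N → ℂ :=
  fun n => Complex.exp (2 * (Real.pi : ℂ) * Complex.I * (fc : ℂ) * (T : ℂ) * ((n : ℕ) : ℂ) *
      (ν : ℂ) / (N : ℂ))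

lemma conj_exp_mul_self {z : ℂ} (hz : (starRingEnd ℂ) z = -z) :
    (starRingEnd ℂ) (Complex.exp z) * Complex.exp z = 1 := by
  rw [← Complex.exp_conj, hz, ← Complex.exp_add, neg_add_cancel, Complex.exp_zero]

lemma steerB_unit (N : ℕ) (Δf τ : ℝ) (n : Fin N) :
    (starRingEnd ℂ) (steerB N Δf τ n) * steerB N Δf τ n = 1 := by
  apply conj_exp_mul_self
  simp only [map_neg, _root_.map_mul, map_div₀, Complex.conj_I, Complex.conj_ofReal, map_natCast,
    map_ofNat]
  ring

lemma steerC_unit (M : ℕ) (fc Tsym ν : ℝ) (m : Fin M) :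
    (starRingEnd ℂ) (steerC M fc Tsym ν m) * steerC M fc Tsym ν m = 1 := by
  apply conj_exp_mul_self
  simp only [map_neg, _root_.map_mul, map_div₀, Complex.conj_I, Complex.conj_ofReal, map_natCast,
    map_ofNat]
  ring

lemma dcoef_unit (N : ℕ) (fc T ν : ℝ) (n : Fin N) :
    (starRingEnd ℂ) (dcoef N fc T ν n) * dcoef N fc T ν n = 1 := by
  apply conj_exp_mul_self
  simp only [map_neg, _root_.map_mul, map_div₀, Complex.conj_I, Complex.conj_ofReal, map_natCast,
    map_ofNat]
  ring

lemma dft_mul_conj (N : ℕ) (p n : Fin N) :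
    dftMatrix N p n * (starRingEnd ℂ) (dftMatrix N p n) = 1 / (N : ℂ) := by
  have hN : (0:ℝ) < N := by exact_mod_cast n.pos
  unfold dftMatrix
  rw [_root_.map_mul]
  have h1 : (starRingEnd ℂ) (1 / (Real.sqrt N : ℂ)) = 1 / (Real.sqrt N : ℂ) := by
    rw [map_div₀, _root_.map_one, Complex.conj_ofReal]
  rw [h1]
  set z : ℂ := -(2 * (Real.pi : ℂ) * Complex.I * ((n : ℕ) : ℂ) * ((p : ℕ) : ℂ) / (N : ℂ)) with hzdef
  have hz : (starRingEnd ℂ) z = -z := by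
    rw [hzdef]
    simp only [map_neg, _root_.map_mul, map_div₀, Complex.conj_I, Complex.conj_ofReal, map_natCast,
      map_ofNat]
    ring
  have hexp : Complex.exp z * (starRingEnd ℂ) (Complex.exp z) = 1 := by
    rw [mul_comm]; exact conj_exp_mul_self hz
  have hsq : ((Real.sqrt N : ℂ)) * (Real.sqrt N : ℂ) = (N : ℂ) := by
    rw [← Complex.ofReal_mul, Real.mul_self_sqrt hN.le]
    norm_cast
  have hs : ((Real.sqrt N : ℂ)) ≠ 0 := by
    intro h
    rw [h, mul_comm, mul_zero] at hsq
    exact (by exact_mod_cast hN.ne' : (N:ℂ) ≠ 0) hsq.symm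
  have : (1 / ((Real.sqrt N : ℝ) : ℂ) * Complex.exp z) *
      (1 / ((Real.sqrt N : ℝ) : ℂ) * (starRingEnd ℂ) (Complex.exp z))
      = (Complex.exp z * (starRingEnd ℂ) (Complex.exp z)) /
        (((Real.sqrt N : ℝ) : ℂ) * ((Real.sqrt N : ℝ) : ℂ)) := by ring
  rw [this, hexp, hsq]

lemma G_apply (N : ℕ) (fc T ν : ℝ) (n p : Fin N) :
    (iciD N fc T ν * (dftMatrix N)ᴴ) n p
      = dcoef N fc T ν n * (starRingEnd ℂ) (dftMatrix N p n) := by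
  simp [iciD, dcoef, Matrix.diagonal_mul, Matrix.conjTranspose_apply, ← starRingEnd_apply]

lemma sum_mul_sum_aux {N' : ℕ} (u v : Fin N' → ℂ) (c1 c2 d1 d2 : ℂ) :
    (c1 * ((∑ p, u p) * d1)) * (c2 * ((∑ q, v q) * d2))
      = ∑ p, ∑ q, c1 * (u p * d1) * (c2 * (v q * d2)) := by
  rw [show (c1 * ((∑ p, u p) * d1)) * (c2 * ((∑ q, v q) * d2))
      = ((∑ p, u p) * (∑ q, v q)) * (c1 * d1 * (c2 * d2)) from by ring,
    Finset.sum_mul_sum, Finset.sum_mul]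
  refine Finset.sum_congr rfl fun p _ => ?_
  rw [Finset.sum_mul]
  exact Finset.sum_congr rfl fun q _ => by ring

/-- Exact expectation form of Lemma 1: for the `K`-target noiseless snapshots
`Ȳ_m = Σ_k ᾱ_k D(ν_k) F_Nᴴ diag(x_m) b(τ_k) conj([c(ν_k)]_m) a_kᵀ`, if the random data
symbols are uncorrelated with variance `σ_x²` and targets are pairwise non-overlapping in
delay or Doppler, then `E[Σ_m Ȳ_mᴴ Ȳ_m] = N M σ_x² Σ_k |ᾱ_k|² a_k^* a_kᵀ` entrywise. -/
theorem stmt_6 {Ω : Type*} [MeasurableSpace Ω] (μ : Measure Ω) [IsProbabilityMeasure μ]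
    (N M NR K : ℕ) (Δf fc T Tsym : ℝ)
    (hΔf : 0 < Δf) (hfc : 0 < fc) (hT : 0 < T) (hTsym : 0 < Tsym)
    (τ ν : Fin K → ℝ) (αbar : Fin K → ℂ) (a : Fin K → Fin NR → ℂ)
    (x : Ω → Fin M → Fin N → ℂ) (σxsq : ℝ) (hσ : 0 ≤ σxsq)
    (hint : ∀ (m : Fin M) (n n' : Fin N),
      Integrable (fun ω => x ω m n * (starRingEnd ℂ) (x ω m n')) μ)
    (hcov : ∀ (m : Fin M) (n n' : Fin N),
      ∫ ω, x ω m n * (starRingEnd ℂ) (x ω m n') ∂μ = if n = n' then (σxsq : ℂ) else 0)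
    (horth : ∀ k₁ k₂ : Fin K, k₁ ≠ k₂ →
      star (steerB N Δf (τ k₁)) ⬝ᵥ steerB N Δf (τ k₂) = 0 ∨
      star (steerC M fc Tsym (ν k₁)) ⬝ᵥ steerC M fc Tsym (ν k₂) = 0)
    (Y : Ω → Fin M → Matrix (Fin N) (Fin NR) ℂ)
    (hY : ∀ ω m, Y ω m = ∑ k,
      (αbar k * (starRingEnd ℂ) (steerC M fc Tsym (ν k) m)) •
        Matrix.vecMulVec
          ((iciD N fc T (ν k) * (dftMatrix N)ᴴ * Matrix.diagonal (x ω m)).mulVec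
            (steerB N Δf (τ k)))
          (a k)) :
    ∀ i j, ∫ ω, (∑ m, (Y ω m)ᴴ * Y ω m) i j ∂μ
      = (N : ℂ) * (M : ℂ) * (σxsq : ℂ) *
          ∑ k, ((‖αbar k‖ ^ 2 : ℝ) : ℂ) * ((starRingEnd ℂ) (a k i) * a k j) := by
  intro i j
  classical
  set B : Fin K → Fin N → ℂ := fun k => steerB N Δf (τ k) with hB
  set C : Fin K → Fin M → ℂ := fun k => steerC M fc Tsym (ν k) with hC
  set Dc : Fin K → Fin N → ℂ := fun k => dcoef N fc T (ν k) with hDc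
  set G : Fin K → Matrix (Fin N) (Fin N) ℂ := fun k => iciD N fc T (ν k) * (dftMatrix N)ᴴ
    with hGdef
  set coeff : Fin M → Fin K → Fin K → Fin N → Fin N → Fin N → ℂ := fun m k1 k2 n p q =>
    ((starRingEnd ℂ) (αbar k1) * C k1 m) * ((αbar k2) * (starRingEnd ℂ) (C k2 m)) *
    ((starRingEnd ℂ) (a k1 i) * a k2 j) *
    ((starRingEnd ℂ) (G k1 n p) * (starRingEnd ℂ) (B k1 p)) *
    (G k2 n q * B k2 q) with hcoeff
  set S : Fin K → Fin K → Fin M → ℂ := fun k1 k2 m =>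
    ((starRingEnd ℂ) (αbar k1) * C k1 m) * (αbar k2 * (starRingEnd ℂ) (C k2 m)) with hS
  set Dd : Fin K → Fin K → Fin N → ℂ := fun k1 k2 n =>
    (starRingEnd ℂ) (Dc k1 n) * Dc k2 n with hDd
  set Bb : Fin K → Fin K → Fin N → ℂ := fun k1 k2 p =>
    (starRingEnd ℂ) (B k1 p) * B k2 p with hBb
  set c0 : Fin K → Fin K → ℂ := fun k1 k2 =>
    ((starRingEnd ℂ) (a k1 i) * a k2 j) * ((1/(N:ℂ)) * (σxsq:ℂ)) with hc0
  -- matrix entry of the data-bearing product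
  have hGd : ∀ ω (m : Fin M) k (n p : Fin N),
      (iciD N fc T (ν k) * (dftMatrix N)ᴴ * Matrix.diagonal (x ω m)) n p
        = G k n p * x ω m p := by
    intro ω m k n p
    exact Matrix.mul_diagonal _ _ _ _
  -- entry formula for Y
  have hYe : ∀ ω m (n : Fin N) (r : Fin NR), Y ω m n r =
      ∑ k, (αbar k * (starRingEnd ℂ) (C k m)) *
        ((∑ p, G k n p * x ω m p * B k p) * a k r) := by
    intro ω m n r
    rw [hY, Matrix.sum_apply]
    refine Finset.sum_congr rfl fun k _ => ?_
    rw [Matrix.smul_apply, Matrix.vecMulVec_apply, smul_eq_mul]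
    congr 2
    simp only [Matrix.mulVec, dotProduct]
    exact Finset.sum_congr rfl fun p _ => by beta_reduce; rw [hGd]
  -- pointwise expansion of the integrand
  have hexp : ∀ ω, (∑ m, (Y ω m)ᴴ * Y ω m) i j
      = ∑ m, ∑ n, ∑ k1, ∑ k2, ∑ p, ∑ q,
          coeff m k1 k2 n p q * (x ω m q * (starRingEnd ℂ) (x ω m p)) := by
    intro ω
    have h0 : (∑ m, (Y ω m)ᴴ * Y ω m) i j
        = ∑ m, ∑ n, (starRingEnd ℂ) (Y ω m n i) * Y ω m n j := by
      simp only [Matrix.sum_apply, Matrix.mul_apply, Matrix.conjTranspose_apply,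
        ← starRingEnd_apply]
    rw [h0]
    refine Finset.sum_congr rfl fun m _ => Finset.sum_congr rfl fun n _ => ?_
    rw [hYe ω m n i, hYe ω m n j, map_sum, Finset.sum_mul_sum]
    refine Finset.sum_congr rfl fun k1 _ => Finset.sum_congr rfl fun k2 _ => ?_
    simp only [_root_.map_mul]
    rw [map_sum]
    simp only [_root_.map_mul, Complex.conj_conj]
    rw [sum_mul_sum_aux
      (fun p => (starRingEnd ℂ) (G k1 n p) * (starRingEnd ℂ) (x ω m p) *
        (starRingEnd ℂ) (B k1 p))
      (fun q => G k2 n q * x ω m q * B k2 q)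
      ((starRingEnd ℂ) (αbar k1) * C k1 m) (αbar k2 * (starRingEnd ℂ) (C k2 m))
      ((starRingEnd ℂ) (a k1 i)) (a k2 j)]
    refine Finset.sum_congr rfl fun p _ => Finset.sum_congr rfl fun q _ => ?_
    simp only [hcoeff]
    ring
  -- move the integral inside the sums
  have hswap : ∫ ω, (∑ m, ∑ n, ∑ k1, ∑ k2, ∑ p, ∑ q,
        coeff m k1 k2 n p q * (x ω m q * (starRingEnd ℂ) (x ω m p))) ∂μ
      = ∑ m, ∑ n, ∑ k1, ∑ k2, ∑ p, ∑ q,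
        coeff m k1 k2 n p q * (if q = p then (σxsq:ℂ) else 0) := by
    have hint1 : ∀ (m : Fin M) (k1 k2 : Fin K) (n p q : Fin N),
        Integrable (fun ω => coeff m k1 k2 n p q *
          (x ω m q * (starRingEnd ℂ) (x ω m p))) μ :=
      fun m k1 k2 n p q => (hint m q p).const_mul _
    rw [integral_finset_sum _ (fun m _ => integrable_finset_sum _ (fun n _ =>
      integrable_finset_sum _ (fun k1 _ => integrable_finset_sum _ (fun k2 _ =>
      integrable_finset_sum _ (fun p _ => integrable_finset_sum _ (fun q _ =>
      hint1 m k1 k2 n p q))))))]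
    refine Finset.sum_congr rfl fun m _ => ?_
    rw [integral_finset_sum _ (fun n _ => integrable_finset_sum _ (fun k1 _ =>
      integrable_finset_sum _ (fun k2 _ => integrable_finset_sum _ (fun p _ =>
      integrable_finset_sum _ (fun q _ => hint1 m k1 k2 n p q)))))]
    refine Finset.sum_congr rfl fun n _ => ?_
    rw [integral_finset_sum _ (fun k1 _ => integrable_finset_sum _ (fun k2 _ =>
      integrable_finset_sum _ (fun p _ => integrable_finset_sum _ (fun q _ =>
      hint1 m k1 k2 n p q))))]
    refine Finset.sum_congr rfl fun k1 _ => ?_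
    rw [integral_finset_sum _ (fun k2 _ => integrable_finset_sum _ (fun p _ =>
      integrable_finset_sum _ (fun q _ => hint1 m k1 k2 n p q)))]
    refine Finset.sum_congr rfl fun k2 _ => ?_
    rw [integral_finset_sum _ (fun p _ => integrable_finset_sum _ (fun q _ =>
      hint1 m k1 k2 n p q))]
    refine Finset.sum_congr rfl fun p _ => ?_
    rw [integral_finset_sum _ (fun q _ => hint1 m k1 k2 n p q)]
    refine Finset.sum_congr rfl fun q _ => ?_
    rw [integral_const_mul, hcov m q p]
  -- collapse the q-sum and rewrite the coefficient
  have hcp : ∀ (m : Fin M) (k1 k2 : Fin K) (n p : Fin N),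
      coeff m k1 k2 n p p * (σxsq:ℂ)
        = S k1 k2 m * (Dd k1 k2 n * (Bb k1 k2 p * c0 k1 k2)) := by
    intro m k1 k2 n p
    simp only [hcoeff, hS, hDd, hBb, hc0, hGdef, hDc]
    rw [G_apply N fc T (ν k1) n p, G_apply N fc T (ν k2) n p, _root_.map_mul,
      Complex.conj_conj]
    linear_combination ((starRingEnd ℂ) (αbar k1) * C k1 m *
      (αbar k2 * (starRingEnd ℂ) (C k2 m)) * ((starRingEnd ℂ) (a k1 i) * a k2 j) *
      ((starRingEnd ℂ) (dcoef N fc T (ν k1) n) * dcoef N fc T (ν k2) n) *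
      ((starRingEnd ℂ) (B k1 p) * B k2 p) * (σxsq:ℂ)) * dft_mul_conj N p n
  have hq : ∀ (m : Fin M) (k1 k2 : Fin K) (n p : Fin N),
      (∑ q, coeff m k1 k2 n p q * (if q = p then (σxsq:ℂ) else 0))
        = S k1 k2 m * (Dd k1 k2 n * (Bb k1 k2 p * c0 k1 k2)) := by
    intro m k1 k2 n p
    rw [Finset.sum_eq_single_of_mem p (Finset.mem_univ p)
      (fun q _ hqp => by simp [hqp])]
    rw [if_pos rfl]
    exact hcp m k1 k2 n p
  -- reorder and factor the sums
  have hreorder : (∑ m : Fin M, ∑ n : Fin N, ∑ k1 : Fin K, ∑ k2 : Fin K, ∑ p : Fin N,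
        S k1 k2 m * (Dd k1 k2 n * (Bb k1 k2 p * c0 k1 k2)))
      = ∑ k1, ∑ k2, (∑ m, S k1 k2 m) *
          ((∑ n, Dd k1 k2 n) * ((∑ p, Bb k1 k2 p) * c0 k1 k2)) := by
    calc (∑ m : Fin M, ∑ n : Fin N, ∑ k1 : Fin K, ∑ k2 : Fin K, ∑ p : Fin N,
          S k1 k2 m * (Dd k1 k2 n * (Bb k1 k2 p * c0 k1 k2)))
        = ∑ m : Fin M, ∑ k1 : Fin K, ∑ n : Fin N, ∑ k2 : Fin K, ∑ p : Fin N,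
            S k1 k2 m * (Dd k1 k2 n * (Bb k1 k2 p * c0 k1 k2)) :=
          Finset.sum_congr rfl fun m _ => Finset.sum_comm
      _ = ∑ k1 : Fin K, ∑ m : Fin M, ∑ n : Fin N, ∑ k2 : Fin K, ∑ p : Fin N,
            S k1 k2 m * (Dd k1 k2 n * (Bb k1 k2 p * c0 k1 k2)) := Finset.sum_comm
      _ = ∑ k1 : Fin K, ∑ m : Fin M, ∑ k2 : Fin K, ∑ n : Fin N, ∑ p : Fin N,
            S k1 k2 m * (Dd k1 k2 n * (Bb k1 k2 p * c0 k1 k2)) :=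
          Finset.sum_congr rfl fun k1 _ => Finset.sum_congr rfl fun m _ => Finset.sum_comm
      _ = ∑ k1 : Fin K, ∑ k2 : Fin K, ∑ m : Fin M, ∑ n : Fin N, ∑ p : Fin N,
            S k1 k2 m * (Dd k1 k2 n * (Bb k1 k2 p * c0 k1 k2)) :=
          Finset.sum_congr rfl fun k1 _ => Finset.sum_comm
      _ = ∑ k1, ∑ k2, (∑ m, S k1 k2 m) *
            ((∑ n, Dd k1 k2 n) * ((∑ p, Bb k1 k2 p) * c0 k1 k2)) := by
          refine Finset.sum_congr rfl fun k1 _ => Finset.sum_congr rfl fun k2 _ => ?_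
          conv_rhs => rw [Finset.sum_mul]
          refine Finset.sum_congr rfl fun m _ => ?_
          conv_rhs => rw [Finset.sum_mul, Finset.mul_sum]
          refine Finset.sum_congr rfl fun n _ => ?_
          conv_rhs => rw [Finset.sum_mul, Finset.mul_sum, Finset.mul_sum]
  -- off-diagonal terms vanish
  have hoff : ∀ k1 k2 : Fin K, k1 ≠ k2 →
      (∑ m, S k1 k2 m) * ((∑ n, Dd k1 k2 n) * ((∑ p, Bb k1 k2 p) * c0 k1 k2)) = 0 := by
    intro k1 k2 hne
    rcases horth k1 k2 hne with hb | hc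
    · have hb' : (∑ p, Bb k1 k2 p) = 0 := by
        rw [show (∑ p, Bb k1 k2 p)
            = star (steerB N Δf (τ k1)) ⬝ᵥ steerB N Δf (τ k2) from by
          simp only [hBb, hB, dotProduct, Pi.star_apply, ← starRingEnd_apply]]
        exact hb
      rw [hb', zero_mul, mul_zero, mul_zero]
    · have hc' : (∑ m, (starRingEnd ℂ) (C k1 m) * C k2 m) = 0 := by
        rw [show (∑ m, (starRingEnd ℂ) (C k1 m) * C k2 m)
            = star (steerC M fc Tsym (ν k1)) ⬝ᵥ steerC M fc Tsym (ν k2) from by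
          simp only [hC, dotProduct, Pi.star_apply, ← starRingEnd_apply]]
        exact hc
      have hS0 : (∑ m, S k1 k2 m) = 0 := by
        have e : (∑ m, S k1 k2 m)
            = ((starRingEnd ℂ) (αbar k1) * αbar k2) *
              (starRingEnd ℂ) (∑ m, (starRingEnd ℂ) (C k1 m) * C k2 m) := by
          rw [map_sum, Finset.mul_sum]
          refine Finset.sum_congr rfl fun m _ => ?_
          simp only [hS, _root_.map_mul, Complex.conj_conj]
          ring
        rw [e, hc', map_zero, mul_zero]
      rw [hS0, zero_mul]
  -- diagonal terms
  have hdiag : ∀ k : Fin K,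
      (∑ m, S k k m) * ((∑ n, Dd k k n) * ((∑ p, Bb k k p) * c0 k k))
        = (N:ℂ) * (M:ℂ) * (σxsq:ℂ) *
          (((‖αbar k‖ ^ 2 : ℝ) : ℂ) * ((starRingEnd ℂ) (a k i) * a k j)) := by
    intro k
    have h1 : (∑ m, S k k m) = (M:ℂ) * ((‖αbar k‖ ^ 2 : ℝ) : ℂ) := by
      have e : ∀ m : Fin M, S k k m = ((‖αbar k‖ ^ 2 : ℝ) : ℂ) := by
        intro m
        have hcu : (starRingEnd ℂ) (C k m) * C k m = 1 := steerC_unit M fc Tsym (ν k) m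
        have h2 : αbar k * (starRingEnd ℂ) (αbar k)
            = ((‖αbar k‖ ^ 2 : ℝ) : ℂ) := by
          rw [Complex.mul_conj, Complex.normSq_eq_norm_sq]
        simp only [hS]
        linear_combination ((starRingEnd ℂ) (αbar k) * αbar k) * hcu + h2
      rw [Finset.sum_congr rfl fun m _ => e m, Finset.sum_const, Finset.card_univ,
        Fintype.card_fin, nsmul_eq_mul]
    have h2 : (∑ n, Dd k k n) = (N:ℂ) := by
      have e : ∀ n : Fin N, Dd k k n = 1 := fun n => dcoef_unit N fc T (ν k) n
      rw [Finset.sum_congr rfl fun n _ => e n, Finset.sum_const, Finset.card_univ,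
        Fintype.card_fin, nsmul_eq_mul, mul_one]
    have h3 : (∑ p, Bb k k p) = (N:ℂ) := by
      have e : ∀ p : Fin N, Bb k k p = 1 := fun p => steerB_unit N Δf (τ k) p
      rw [Finset.sum_congr rfl fun p _ => e p, Finset.sum_const, Finset.card_univ,
        Fintype.card_fin, nsmul_eq_mul, mul_one]
    rw [h1, h2, h3]
    simp only [hc0]
    by_cases hN : (N:ℂ) = 0
    · simp [hN]
    · field_simp
  -- put everything together
  have hI : ∫ ω, (∑ m, (Y ω m)ᴴ * Y ω m) i j ∂μ
      = ∫ ω, (∑ m, ∑ n, ∑ k1, ∑ k2, ∑ p, ∑ q,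
          coeff m k1 k2 n p q * (x ω m q * (starRingEnd ℂ) (x ω m p))) ∂μ :=
    integral_congr_ae (Filter.Eventually.of_forall fun ω => hexp ω)
  rw [hI, hswap]
  calc (∑ m : Fin M, ∑ n : Fin N, ∑ k1 : Fin K, ∑ k2 : Fin K, ∑ p : Fin N, ∑ q : Fin N,
        coeff m k1 k2 n p q * (if q = p then (σxsq:ℂ) else 0))
      = ∑ m : Fin M, ∑ n : Fin N, ∑ k1 : Fin K, ∑ k2 : Fin K, ∑ p : Fin N,
          S k1 k2 m * (Dd k1 k2 n * (Bb k1 k2 p * c0 k1 k2)) := by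
        refine Finset.sum_congr rfl fun m _ => Finset.sum_congr rfl fun n _ =>
          Finset.sum_congr rfl fun k1 _ => Finset.sum_congr rfl fun k2 _ =>
          Finset.sum_congr rfl fun p _ => ?_
        exact hq m k1 k2 n p
    _ = ∑ k1, ∑ k2, (∑ m, S k1 k2 m) *
          ((∑ n, Dd k1 k2 n) * ((∑ p, Bb k1 k2 p) * c0 k1 k2)) := hreorder
    _ = ∑ k1, (∑ m, S k1 k1 m) *
          ((∑ n, Dd k1 k1 n) * ((∑ p, Bb k1 k1 p) * c0 k1 k1)) := by
        refine Finset.sum_congr rfl fun k1 _ => ?_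
        exact Finset.sum_eq_single_of_mem k1 (Finset.mem_univ k1)
          (fun k2 _ hne => hoff k1 k2 (Ne.symm hne))
    _ = (N : ℂ) * (M : ℂ) * (σxsq : ℂ) *
          ∑ k, ((‖αbar k‖ ^ 2 : ℝ) : ℂ) *
            ((starRingEnd ℂ) (a k i) * a k j) := by
        rw [Finset.mul_sum]
        exact Finset.sum_congr rfl fun k _ => hdiag k
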